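/- Let u : [t1,∞) → ℝ be differentiable with u(t)² ≤ K t^{-1} for all t ≥ t1 > 0 and some K > 0, and suppose ∂_t(u²)(t) ≤ -(3/t) u(t)² + C t^{-2} |u(t)| for all t ≥ t1. Then there exists C' > 0 such that |u(t)| ≤ C' t^{-1} for all t ≥ t1. -/

import Mathlib

theorem stmt5 (u : ℝ → ℝ) (t1 K C : ℝ) (ht1 : 0 < t1) (hK : 0 < K) (hC : 0 < C)
    (hdiff : ∀ t ≥ t1, DifferentiableAt ℝ u t)
    (hbound : ∀ t ≥ t1, (u t) ^ 2 ≤ K * t⁻¹)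
    (hineq : ∀ t ≥ t1, deriv (fun s => (u s) ^ 2) t ≤ -(3 / t) * (u t) ^ 2 + C / t ^ 2 * |u t|) :
    ∃ C' > 0, ∀ t ≥ t1, |u t| ≤ C' * t⁻¹ := by
  set C₂ : ℝ := C + 1 with hC₂def
  set A : ℝ := Real.sqrt K * t1 with hAdef
  have hA : 0 < A := mul_pos (Real.sqrt_pos.2 hK) ht1
  set v : ℝ → ℝ := fun t => t ^ 3 * (u t) ^ 2 with hvdef
  set vd : ℝ → ℝ := fun t => 3 * t ^ 2 * (u t) ^ 2 + t ^ 3 * deriv (fun s => (u s) ^ 2) t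
    with hvddef
  set B : ℝ → ℝ := fun t => (A + C₂ * Real.sqrt t) ^ 2 with hBdef
  set Bd : ℝ → ℝ := fun t => (A + C₂ * Real.sqrt t) * (C₂ / Real.sqrt t) with hBddef
  -- key comparison
  have key : ∀ t ≥ t1, v t ≤ B t := by
    intro b hb
    have hmain : ∀ ⦃x⦄, x ∈ Set.Icc t1 b → v x ≤ B x := by
      refine image_le_of_deriv_right_lt_deriv_boundary' (f' := vd) (B' := Bd)
        ?_ ?_ ?_ ?_ ?_ ?_
      · -- continuity of v
        intro x hx
        exact (((differentiableAt_pow 3).mul ((hdiff x hx.1).pow 2)).continuousAt).continuousWithinAt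
      · -- derivative of v
        intro x hx
        have h2 : HasDerivAt (fun s => (u s) ^ 2) (deriv (fun s => (u s) ^ 2) x) x :=
          ((hdiff x hx.1).pow 2).hasDerivAt
        have h3 : HasDerivAt (fun s : ℝ => s ^ 3) (3 * x ^ 2) x := by
          simpa using hasDerivAt_pow 3 x
        have h4 := h3.mul h2
        have h5 : HasDerivAt v (vd x) x := by convert h4 using 1 <;> rfl
        exact h5.hasDerivWithinAt
      · -- initial condition
        have hb1 := hbound t1 le_rfl
        have h1 : v t1 ≤ K * t1 ^ 2 := by
          have h0 : t1 ^ 3 * (u t1) ^ 2 ≤ t1 ^ 3 * (K * t1⁻¹) :=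
            mul_le_mul_of_nonneg_left hb1 (by positivity)
          have h0' : t1 ^ 3 * (K * t1⁻¹) = K * t1 ^ 2 := by
            field_simp
          simp only [hvdef]; linarith
        have h2 : K * t1 ^ 2 = A ^ 2 := by
          rw [hAdef, mul_pow, Real.sq_sqrt hK.le]
        have h3 : A ^ 2 ≤ B t1 := by
          have hs : 0 ≤ C₂ * Real.sqrt t1 := by positivity
          have hAle : A ≤ A + C₂ * Real.sqrt t1 := by linarith
          exact pow_le_pow_left₀ hA.le hAle 2
        linarith
      · -- continuity of B
        intro x hx
        have hx0 : 0 < x := lt_of_lt_of_le ht1 hx.1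
        exact ((Continuous.pow (continuous_const.add
          (continuous_const.mul Real.continuous_sqrt)) 2)).continuousWithinAt
      · -- derivative of B
        intro x hx
        have hx0 : 0 < x := lt_of_lt_of_le ht1 hx.1
        have hs0 : 0 < Real.sqrt x := Real.sqrt_pos.2 hx0
        have hsq : HasDerivAt Real.sqrt (1 / (2 * Real.sqrt x)) x :=
          Real.hasDerivAt_sqrt hx0.ne'
        have h1 : HasDerivAt (fun s => A + C₂ * Real.sqrt s) (C₂ * (1 / (2 * Real.sqrt x))) x :=
          (hsq.const_mul C₂).const_add A
        have h2 := h1.pow 2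
        have : HasDerivAt B (Bd x) x := by
          refine h2.congr_deriv ?_
          rw [hBddef]
          push_cast
          field_simp
        exact this.hasDerivWithinAt
      · -- strict inequality at crossing
        intro x hx hcross
        have hx0 : 0 < x := lt_of_lt_of_le ht1 hx.1
        have hs0 : 0 < Real.sqrt x := Real.sqrt_pos.2 hx0
        set s := Real.sqrt x with hsdef
        have hs2 : s ^ 2 = x := Real.sq_sqrt hx0.le
        have hcross' : x ^ 3 * (u x) ^ 2 = (A + C₂ * s) ^ 2 := hcross
        have habs : s ^ 3 * |u x| = A + C₂ * s := by
          have h1 : (s ^ 3 * |u x|) ^ 2 = (A + C₂ * s) ^ 2 := by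
            have he : (s ^ 3 * |u x|) ^ 2 = x ^ 3 * (u x) ^ 2 := by
              rw [mul_pow, ← pow_mul, sq_abs, ← hs2]; ring
            rw [he]; exact hcross'
          have h2 : 0 ≤ s ^ 3 * |u x| := by positivity
          have h3 : 0 ≤ A + C₂ * s := by positivity
          nlinarith [sq_nonneg (s ^ 3 * |u x| - (A + C₂ * s)),
            sq_nonneg (s ^ 3 * |u x| + (A + C₂ * s))]
        have hder := hineq x hx.1
        have hvd : vd x ≤ C * x * |u x| := by
          have h4 : x ^ 3 * deriv (fun s => (u s) ^ 2) x
              ≤ x ^ 3 * (-(3 / x) * (u x) ^ 2 + C / x ^ 2 * |u x|) :=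
            mul_le_mul_of_nonneg_left hder (by positivity)
          have h5 : x ^ 3 * (-(3 / x) * (u x) ^ 2 + C / x ^ 2 * |u x|)
              = -(3 * x ^ 2 * (u x) ^ 2) + C * x * |u x| := by
            field_simp
          simp only [hvddef]
          linarith [h4, h5.le]
        have hfin : C * x * |u x| = C * (A + C₂ * s) / s := by
          rw [eq_div_iff hs0.ne']
          calc C * x * |u x| * s = C * (s ^ 3 * |u x|) := by rw [← hs2]; ring
            _ = C * (A + C₂ * s) := by rw [habs]
        have hBd : Bd x = C₂ * (A + C₂ * s) / s := by
          simp only [hBddef, ← hsdef]; ring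
        have hlt : C * x * |u x| < Bd x := by
          rw [hfin, hBd, div_lt_div_iff_of_pos_right hs0]
          have hpos : 0 < A + C₂ * s := by positivity
          have : C < C₂ := by simp only [hC₂def]; linarith
          nlinarith
        exact lt_of_le_of_lt hvd hlt
    exact hmain ⟨hb, le_rfl⟩
  -- conclude
  refine ⟨A / Real.sqrt t1 + C₂, by positivity, fun t ht => ?_⟩
  have ht0 : 0 < t := lt_of_lt_of_le ht1 ht
  have hs0 : 0 < Real.sqrt t := Real.sqrt_pos.2 ht0
  have hst1 : 0 < Real.sqrt t1 := Real.sqrt_pos.2 ht1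
  have hsle : Real.sqrt t1 ≤ Real.sqrt t := Real.sqrt_le_sqrt ht
  set M : ℝ := A / Real.sqrt t1 + C₂ with hMdef
  have hM : 0 < M := by positivity
  have h1 : v t ≤ B t := key t ht
  have hAle : A ≤ A / Real.sqrt t1 * Real.sqrt t := by
    rw [div_mul_eq_mul_div, le_div_iff₀ hst1]
    exact mul_le_mul_of_nonneg_left hsle hA.le
  have h2 : A + C₂ * Real.sqrt t ≤ M * Real.sqrt t := by
    calc A + C₂ * Real.sqrt t
        ≤ A / Real.sqrt t1 * Real.sqrt t + C₂ * Real.sqrt t := by linarith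
      _ = M * Real.sqrt t := by rw [hMdef]; ring
  have hB2 : B t ≤ (M * Real.sqrt t) ^ 2 := pow_le_pow_left₀ (by positivity) h2 2
  have hBt : (M * Real.sqrt t) ^ 2 = M ^ 2 * t := by
    rw [mul_pow, Real.sq_sqrt ht0.le]
  have h3 : (|u t| * t) ^ 2 ≤ M ^ 2 := by
    have hfin : (|u t| * t) ^ 2 * t ≤ M ^ 2 * t := by
      have hv : (|u t| * t) ^ 2 * t = v t := by
        simp only [hvdef]; rw [mul_pow, sq_abs]; ring
      rw [hv, ← hBt]; exact le_trans h1 hB2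
    exact le_of_mul_le_mul_right hfin ht0
  have h4 : |u t| * t ≤ M :=
    (pow_le_pow_iff_left₀ (by positivity) hM.le (by norm_num : (2:ℕ) ≠ 0)).mp h3
  have : M * t⁻¹ = M / t := by ring
  rw [this, le_div_iff₀ ht0]
  exact h4
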